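/- Let M be a sharp, integral commutative monoid and Γ = (X, r, i, l) an M-metrised graph. Then dgon(Γ) ≤ ggon(Γ). Equivalently: for every harmonic, non-degenerate morphism φ : Γ → T onto an M-metrised tree T, there exists a divisor D ∈ Div(Γ) with r(D) ≥ 1 and deg(D) = deg(φ); in particular dgon(Γ) ≤ deg(φ). -/

import Mathlib

noncomputable section
open scoped Classical

/-! ### Groupification of a cancellative additive commutative monoid -/

variable (M : Type) [AddCancelCommMonoid M]

def gpSetoid : Setoid (M × M) where
  r p q := p.1 + q.2 = q.1 + p.2
  iseqv := by
    refine ⟨fun p => rfl, fun h => h.symm, fun {p q r} h1 h2 => ?_⟩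
    have key : (p.1 + r.2) + (q.1 + q.2) = (r.1 + p.2) + (q.1 + q.2) := by
      calc (p.1 + r.2) + (q.1 + q.2) = (p.1 + q.2) + (q.1 + r.2) := by abel
        _ = (q.1 + p.2) + (r.1 + q.2) := by rw [h1, h2]
        _ = (r.1 + p.2) + (q.1 + q.2) := by abel
    exact add_right_cancel key

/-- The groupification `M^gp` of a cancellative commutative monoid `M`:
the quotient of `M × M` by `(a,b) ~ (c,d) ↔ a + d = c + b` (think of `(a,b)` as `a - b`). -/
def Gp : Type := Quotient (gpSetoid M)

namespace Gp

variable {M}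

/-- The element `a - b` of `M^gp`. -/
def mk (a b : M) : Gp M := Quotient.mk (gpSetoid M) (a, b)

instance : Zero (Gp M) := ⟨mk 0 0⟩

instance : Add (Gp M) :=
  ⟨Quotient.map₂ (fun p q => (p.1 + q.1, p.2 + q.2)) (by
    intro p p' hp q q' hq
    show (p.1 + q.1) + (p'.2 + q'.2) = (p'.1 + q'.1) + (p.2 + q.2)
    calc (p.1 + q.1) + (p'.2 + q'.2) = (p.1 + p'.2) + (q.1 + q'.2) := by abel
      _ = (p'.1 + p.2) + (q'.1 + q.2) := by rw [hp, hq]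
      _ = (p'.1 + q'.1) + (p.2 + q.2) := by abel)⟩

instance : Neg (Gp M) :=
  ⟨Quotient.map (fun p => (p.2, p.1)) (by
    intro p p' hp
    show p.2 + p'.1 = p'.2 + p.1
    calc p.2 + p'.1 = p'.1 + p.2 := by abel
      _ = p.1 + p'.2 := hp.symm
      _ = p'.2 + p.1 := by abel)⟩

lemma mk_add_mk (a b c d : M) : mk a b + mk c d = mk (a + c) (b + d) := rfl
lemma neg_mk (a b : M) : -(mk a b) = mk b a := rfl
lemma zero_def : (0 : Gp M) = mk 0 0 := rfl

instance : AddCommGroup (Gp M) where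
  add := (· + ·)
  zero := 0
  neg := Neg.neg
  nsmul := nsmulRec
  zsmul := zsmulRec
  add_assoc := by
    intro a b c
    induction a using Quotient.inductionOn with | h a =>
    induction b using Quotient.inductionOn with | h b =>
    induction c using Quotient.inductionOn with | h c =>
    exact Quotient.sound (by
      show ((a.1 + b.1) + c.1) + (a.2 + (b.2 + c.2)) = (a.1 + (b.1 + c.1)) + ((a.2 + b.2) + c.2)
      abel)
  zero_add := by
    intro a
    induction a using Quotient.inductionOn with | h a =>
    exact Quotient.sound (by
      show (0 + a.1) + a.2 = a.1 + (0 + a.2)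
      abel)
  add_zero := by
    intro a
    induction a using Quotient.inductionOn with | h a =>
    exact Quotient.sound (by
      show (a.1 + 0) + a.2 = a.1 + (a.2 + 0)
      abel)
  neg_add_cancel := by
    intro a
    induction a using Quotient.inductionOn with | h a =>
    exact Quotient.sound (by
      show (a.2 + a.1) + 0 = 0 + (a.1 + a.2)
      abel)
  add_comm := by
    intro a b
    induction a using Quotient.inductionOn with | h a =>
    induction b using Quotient.inductionOn with | h b =>
    exact Quotient.sound (by
      show (a.1 + b.1) + (b.2 + a.2) = (b.1 + a.1) + (a.2 + b.2)
      abel)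

/-- The canonical map `M → M^gp`. -/
def of : M →+ Gp M where
  toFun a := mk a 0
  map_zero' := rfl
  map_add' := by
    intro a b
    exact (Quotient.sound (by
      show (a + b) + (0 + 0) = (a + b) + 0
      abel) : mk (a + b) 0 = mk (a + b) (0 + 0))

/-- Functoriality of groupification: a monoid homomorphism `f : M →+ N` induces
`f^gp : M^gp →+ N^gp`. -/
def map {N : Type} [AddCancelCommMonoid N] (f : M →+ N) : Gp M →+ Gp N where
  toFun := Quotient.map (fun p => (f p.1, f p.2)) (by
    intro p p' hp
    show f p.1 + f p'.2 = f p'.1 + f p.2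
    rw [← f.map_add, ← f.map_add, hp])
  map_zero' := by
    show mk (f 0) (f 0) = mk 0 0
    rw [f.map_zero]
  map_add' := by
    intro a b
    induction a using Quotient.inductionOn with | h a =>
    induction b using Quotient.inductionOn with | h b =>
    show mk (f (a.1 + b.1)) (f (a.2 + b.2)) = mk (f a.1 + f b.1) (f a.2 + f b.2)
    rw [f.map_add, f.map_add]

end Gp

/-- Sharpness: the only invertible element of `M` is `0`. -/
def Sharp : Prop := ∀ a b : M, a + b = 0 → a = 0

/-! ### Monoid-metrised graphs -/

/-- A graph (Definition 2.3 of the paper) together with a metric taking values in the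
monoid `M`: `X` is the finite set of vertices and half-edges, `r` sends an element to its
root vertex, `i` is the pairing involution on half-edges, and `l` assigns a length in `M`
to every half-edge (and `0` to every vertex). -/
structure MGraph where
  X : Type
  [finX : Fintype X]
  r : X → X
  i : X → X
  r_idem : ∀ x, r (r x) = r x
  i_invol : ∀ x, i (i x) = x
  fix_iff : ∀ x, i x = x ↔ r x = x
  l : X → M
  l_i : ∀ x, l (i x) = l x
  l_zero_iff : ∀ x, l x = 0 ↔ i x = x

attribute [instance] MGraph.finX

namespace MGraph

variable {M} (G : MGraph M)

/-- `x` is a vertex iff it is fixed by the involution. -/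
def IsVertex (x : G.X) : Prop := G.i x = x

/-- `x` is a half-edge iff it is not fixed by the involution. -/
def IsHalfEdge (x : G.X) : Prop := G.i x ≠ x

/-- The vertex set of `G`. -/
abbrev V : Type := { x : G.X // G.IsVertex x }

/-- The root of any element of `X` is a vertex. -/
def rv (x : G.X) : G.V := ⟨G.r x, (G.fix_iff (G.r x)).mpr (G.r_idem x)⟩

/-- Two vertices are adjacent if some edge joins them. -/
def Adj (u v : G.V) : Prop := ∃ x, G.IsHalfEdge x ∧ G.rv x = u ∧ G.rv (G.i x) = v

/-- `G` is connected. (All graphs in the paper are assumed connected.) -/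
def IsConnected : Prop := Nonempty G.X ∧ ∀ u v : G.V, Relation.ReflTransGen G.Adj u v

/-- The degree of a divisor `D : V → ℤ`. -/
def degD (D : G.V → ℤ) : ℤ := ∑ v, D v

/-- A divisor is effective if all its coefficients are nonnegative. -/
def Effective (D : G.V → ℤ) : Prop := ∀ v, 0 ≤ D v

/-- `g : V → M^gp` is piecewise linear if, along every half-edge, the difference of the
values of `g` at the two endpoints is an integer multiple of the length of that edge. -/
def IsPL (g : G.V → Gp M) : Prop :=
  ∀ x, G.IsHalfEdge x → ∃ n : ℤ, g (G.rv x) - g (G.rv (G.i x)) = n • Gp.of (G.l x)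

/-- The (outgoing) integer slope of `g` along the half-edge `x`. -/
def slope (g : G.V → Gp M) (x : G.X) : ℤ :=
  if h : ∃ n : ℤ, g (G.rv x) - g (G.rv (G.i x)) = n • Gp.of (G.l x) then h.choose else 0

/-- The Laplacian of a piecewise linear function. -/
def lap (g : G.V → Gp M) : G.V → ℤ :=
  fun v => ∑ x : G.X, if G.IsHalfEdge x ∧ G.r x = v.val then G.slope g x else 0

/-- Principal divisors: those of the form `Δ(g)` for a piecewise linear `g`. -/
def IsPrincipal (D : G.V → ℤ) : Prop := ∃ g, G.IsPL g ∧ G.lap g = D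

/-- The rank of a divisor `D`:
`r(D) = max { k : for every effective divisor F of degree k, |D - F| ≠ ∅ }`. -/
def rank (D : G.V → ℤ) : ℤ :=
  sSup {k : ℤ | ∀ F : G.V → ℤ, G.Effective F → G.degD F = k →
    ∃ E : G.V → ℤ, G.Effective E ∧ G.IsPrincipal (D - F - E)}

/-- The divisorial gonality: the minimal degree of a divisor of rank at least 1. -/
def dgon : ℤ := sInf {d : ℤ | ∃ D : G.V → ℤ, 1 ≤ G.rank D ∧ G.degD D = d}

end MGraph


/-! ### Morphisms of monoid-metrised graphs -/

namespace MGraph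

variable {M : Type} [AddCancelCommMonoid M]

/-- A morphism of `M`-metrised graphs (Definition 3.1 of the paper): vertices map to
vertices; a half-edge mapping to a half-edge respects roots and the target length is an
integer multiple of the source length; a half-edge collapsed to a vertex has both of its
endpoints mapped to that vertex. -/
structure Hom (G G' : MGraph M) where
  f : G.X → G'.X
  vtx : ∀ x, G.IsVertex x → G'.IsVertex (f x)
  edge : ∀ x, G.IsHalfEdge x → G'.IsHalfEdge (f x) →
    f (G.r x) = G'.r (f x) ∧ f (G.r (G.i x)) = G'.r (G'.i (f x)) ∧
      ∃ n : ℕ, G'.l (f x) = n • G.l x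
  contr : ∀ x, G.IsHalfEdge x → G'.IsVertex (f x) →
    f (G.r x) = f x ∧ f (G.r (G.i x)) = f x

namespace Hom

variable {G G' : MGraph M} (φ : Hom G G')

/-- The induced map on vertices. -/
def vmap (v : G.V) : G'.V := ⟨φ.f v.val, φ.vtx v.val v.property⟩

/-- The slope `μ_φ(x) = l'(φ(x)) / l(x)` of `φ` along a half-edge `x` (zero if `φ`
collapses `x` to a vertex). -/
def mu (x : G.X) : ℕ :=
  if h : G'.IsHalfEdge (φ.f x) ∧ ∃ n : ℕ, G'.l (φ.f x) = n • G.l x then h.2.choose else 0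

/-- The multiplicity `m_{φ,v}(e') = ∑_{x ∈ H_v, φ(x) = e'} μ_φ(x)` of a half-edge `e'` of
`G'` at a vertex `v` of `G`. -/
def multAt (v : G.V) (e' : G'.X) : ℕ :=
  ∑ x : G.X, if G.IsHalfEdge x ∧ G.r x = v.val ∧ φ.f x = e' then φ.mu x else 0

/-- `φ` is harmonic (= horizontally conformal): for every vertex `v`, all half-edges of
`G'` rooted at `φ(v)` have the same multiplicity at `v`. -/
def Harmonic : Prop :=
  ∀ (v : G.V) (e' f' : G'.X), G'.IsHalfEdge e' → G'.IsHalfEdge f' →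
    G'.r e' = φ.f v.val → G'.r f' = φ.f v.val → φ.multAt v e' = φ.multAt v f'

/-- The horizontal multiplicity `m_φ(v)` of a vertex (the common value of `m_{φ,v}(e')`
over half-edges `e'` rooted at `φ(v)`; zero if there are none). -/
def mV (v : G.V) : ℕ :=
  if h : ∃ e', G'.IsHalfEdge e' ∧ G'.r e' = φ.f v.val then φ.multAt v h.choose else 0

/-- `φ` is non-degenerate if every vertex has positive horizontal multiplicity. -/
def Nondeg : Prop := ∀ v : G.V, 0 < φ.mV v

/-- The multiplicity `m_φ(e') = ∑_{v : φ(v) = r'(e')} m_{φ,v}(e')` of a half-edge of `G'`. -/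
def mE (e' : G'.X) : ℕ :=
  ∑ v : G.V, if φ.f v.val = G'.r e' then φ.multAt v e' else 0

/-- The degree of a harmonic morphism: `deg(φ) = m_φ(e')` for any half-edge `e'` of `G'`. -/
def deg : ℕ := if h : ∃ e', G'.IsHalfEdge e' then φ.mE h.choose else 0

/-- The pullback of divisors: `φ*(D') = ∑_v D'(φ(v)) · m_φ(v) · [v]`. -/
def pullback (D' : G'.V → ℤ) : G.V → ℤ :=
  fun v => D' (φ.vmap v) * (φ.mV v : ℤ)

/-- The pushforward of divisors: `φ_*(D) = ∑_v D(v) · [φ(v)]`. -/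
def pushforward (D : G.V → ℤ) : G'.V → ℤ :=
  fun v' => ∑ v : G.V, if φ.vmap v = v' then D v else 0

end Hom

/-- A cycle in `G`: a cyclic sequence of half-edges `e_0, …, e_k` in which consecutive
half-edges are consecutive (the far endpoint of each is the root of the next) and which
never immediately backtracks. -/
def HasCycle (G : MGraph M) : Prop :=
  ∃ (k : ℕ) (e : ZMod (k + 1) → G.X), (∀ j, G.IsHalfEdge (e j)) ∧
    (∀ j, G.r (G.i (e j)) = G.r (e (j + 1))) ∧ (∀ j, e (j + 1) ≠ G.i (e j))

/-- A tree is a connected graph with no cycles. -/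
def IsTree (G : MGraph M) : Prop := G.IsConnected ∧ ¬ G.HasCycle

/-- The geometric gonality of `G`: the minimal degree of a harmonic, non-degenerate
morphism from `G` onto an `M`-metrised tree, or `∞` if no such morphism exists. -/
def ggon (G : MGraph M) : ℕ∞ :=
  sInf {d : ℕ∞ | ∃ (T : MGraph M) (φ : Hom G T),
    T.IsTree ∧ φ.Harmonic ∧ φ.Nondeg ∧ (φ.deg : ℕ∞) = d}

end MGraph


/-! ### Auxiliary lemmas for the proof -/

namespace GonAux

variable {M : Type} [AddCancelCommMonoid M]

lemma mk_eq_mk {a b c d : M} : (Gp.mk a b = Gp.mk c d) ↔ a + d = c + b :=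
  ⟨fun h => Quotient.exact h, fun h => Quotient.sound h⟩

lemma of_eq_zero {a : M} : Gp.of a = (0 : Gp M) ↔ a = 0 := by
  show Gp.mk a 0 = Gp.mk 0 0 ↔ _
  rw [mk_eq_mk]; constructor <;> intro h <;> simpa using h

lemma nsmul_eq_zero (hs : Sharp M) {a : M} : ∀ {n : ℕ}, n • a = 0 → n ≠ 0 → a = 0 := by
  intro n h hn
  obtain ⟨m, rfl⟩ := Nat.exists_eq_succ_of_ne_zero hn
  rw [succ_nsmul'] at h
  exact hs a (m • a) h

lemma nsmul_cancel (hs : Sharp M) {a : M} (ha : a ≠ 0) {m n : ℕ} (h : m • a = n • a) :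
    m = n := by
  rcases le_total m n with hle | hle
  · obtain ⟨d, rfl⟩ := Nat.exists_eq_add_of_le hle
    rw [add_nsmul] at h
    nth_rewrite 1 [← add_zero (m • a)] at h
    have : (0 : M) = d • a := add_left_cancel h
    rcases Nat.eq_zero_or_pos d with h0 | h0
    · omega
    · exact absurd (nsmul_eq_zero hs this.symm (by omega)) ha
  · obtain ⟨d, rfl⟩ := Nat.exists_eq_add_of_le hle
    rw [add_nsmul] at h
    nth_rewrite 2 [← add_zero (n • a)] at h
    have : d • a = (0 : M) := add_left_cancel h
    rcases Nat.eq_zero_or_pos d with h0 | h0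
    · omega
    · exact absurd (nsmul_eq_zero hs this (by omega)) ha

lemma zsmul_of_eq_zero (hs : Sharp M) {a : M} (ha : a ≠ 0) {n : ℤ}
    (h : n • Gp.of a = 0) : n = 0 := by
  rcases lt_trichotomy n 0 with hn | hn | hn
  · exfalso
    have h' : (-n) • Gp.of a = 0 := by rw [neg_zsmul, h, neg_zero]
    have h2 : ((-n).toNat : ℤ) • Gp.of a = 0 := by
      rwa [Int.toNat_of_nonneg (by omega)]
    rw [natCast_zsmul, ← map_nsmul, of_eq_zero] at h2
    exact ha (nsmul_eq_zero hs h2 (by omega))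
  · exact hn
  · exfalso
    have h2 : ((n).toNat : ℤ) • Gp.of a = 0 := by
      rwa [Int.toNat_of_nonneg (by omega)]
    rw [natCast_zsmul, ← map_nsmul, of_eq_zero] at h2
    exact ha (nsmul_eq_zero hs h2 (by omega))

lemma zsmul_of_cancel (hs : Sharp M) {a : M} (ha : a ≠ 0) {m n : ℤ}
    (h : m • Gp.of a = n • Gp.of a) : m = n := by
  have : (m - n) • Gp.of a = 0 := by rw [sub_zsmul, h]; exact add_neg_cancel _
  have := zsmul_of_eq_zero hs ha this
  omega


section Graph

variable {M : Type} [AddCancelCommMonoid M] {G : MGraph M}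

lemma l_ne_zero {x : G.X} (hx : G.IsHalfEdge x) : G.l x ≠ 0 :=
  fun h => hx ((G.l_zero_iff x).mp h)

lemma isHalfEdge_i {x : G.X} (hx : G.IsHalfEdge x) : G.IsHalfEdge (G.i x) := by
  intro h
  rw [G.i_invol x] at h
  exact hx h.symm

lemma slope_eq (hs : Sharp M) (g : G.V → Gp M) {x : G.X} (hx : G.IsHalfEdge x) {n : ℤ}
    (h : g (G.rv x) - g (G.rv (G.i x)) = n • Gp.of (G.l x)) : G.slope g x = n := by
  have hex : ∃ m : ℤ, g (G.rv x) - g (G.rv (G.i x)) = m • Gp.of (G.l x) := ⟨n, h⟩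
  rw [MGraph.slope, dif_pos hex]
  exact zsmul_of_cancel hs (l_ne_zero hx) (hex.choose_spec.symm.trans h)

lemma slope_spec (hs : Sharp M) {g : G.V → Gp M} (hg : G.IsPL g) {x : G.X}
    (hx : G.IsHalfEdge x) :
    g (G.rv x) - g (G.rv (G.i x)) = G.slope g x • Gp.of (G.l x) := by
  obtain ⟨n, hn⟩ := hg x hx
  rw [slope_eq hs g hx hn]; exact hn

lemma slope_i (hs : Sharp M) {g : G.V → Gp M} (hg : G.IsPL g) {x : G.X}
    (hx : G.IsHalfEdge x) : G.slope g (G.i x) = - G.slope g x := by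
  apply slope_eq hs g (isHalfEdge_i hx)
  rw [G.i_invol x, G.l_i x, neg_zsmul, ← slope_spec hs hg hx, neg_sub]

lemma isPL_zero : G.IsPL (fun _ => (0 : Gp M)) := by
  intro x _
  exact ⟨0, by simp⟩

lemma lap_zero (hs : Sharp M) : G.lap (fun _ => (0 : Gp M)) = 0 := by
  funext v
  rw [MGraph.lap]
  apply Finset.sum_eq_zero
  intro x _
  split
  · next h => exact slope_eq hs _ h.1 (by simp)
  · rfl

lemma isPrincipal_zero (hs : Sharp M) : G.IsPrincipal 0 :=
  ⟨fun _ => 0, isPL_zero, lap_zero hs⟩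

lemma isPrincipal_add {D E : G.V → ℤ} (hs : Sharp M) (hD : G.IsPrincipal D)
    (hE : G.IsPrincipal E) : G.IsPrincipal (D + E) := by
  obtain ⟨g, hg, hgl⟩ := hD
  obtain ⟨h, hh, hhl⟩ := hE
  refine ⟨fun v => g v + h v, ?_, ?_⟩
  · intro x hx
    obtain ⟨n, hn⟩ := hg x hx
    obtain ⟨m, hm⟩ := hh x hx
    exact ⟨n + m, by rw [add_zsmul, ← hn, ← hm]; exact add_sub_add_comm _ _ _ _⟩
  · funext v
    rw [← hgl, ← hhl]
    show _ = G.lap g v + G.lap h v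
    rw [MGraph.lap, MGraph.lap, MGraph.lap, ← Finset.sum_add_distrib]
    apply Finset.sum_congr rfl
    intro x _
    split
    · next hc =>
      apply slope_eq hs _ hc.1
      rw [add_zsmul, ← slope_spec hs hg hc.1, ← slope_spec hs hh hc.1]
      abel
    · simp

lemma isPrincipal_neg {D : G.V → ℤ} (hs : Sharp M) (hD : G.IsPrincipal D) :
    G.IsPrincipal (-D) := by
  obtain ⟨g, hg, hgl⟩ := hD
  refine ⟨fun v => -(g v), ?_, ?_⟩
  · intro x hx
    obtain ⟨n, hn⟩ := hg x hx
    exact ⟨-n, by rw [neg_zsmul, ← hn]; exact (neg_sub_neg _ _).trans (neg_sub _ _).symm⟩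
  · funext v
    rw [← hgl]
    show _ = -(G.lap g v)
    rw [MGraph.lap, MGraph.lap, ← Finset.sum_neg_distrib]
    apply Finset.sum_congr rfl
    intro x _
    split
    · next hc =>
      apply slope_eq hs _ hc.1
      rw [neg_zsmul, ← slope_spec hs hg hc.1]
      abel
    · simp

lemma isPrincipal_sub {D E : G.V → ℤ} (hs : Sharp M) (hD : G.IsPrincipal D)
    (hE : G.IsPrincipal E) : G.IsPrincipal (D - E) := by
  rw [sub_eq_add_neg]
  exact isPrincipal_add hs hD (isPrincipal_neg hs hE)

lemma degD_lap (hs : Sharp M) {g : G.V → Gp M} (hg : G.IsPL g) : G.degD (G.lap g) = 0 := by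
  have h1 : G.degD (G.lap g) = ∑ x : G.X, if G.IsHalfEdge x then G.slope g x else 0 := by
    rw [MGraph.degD]
    simp only [MGraph.lap]
    rw [Finset.sum_comm]
    apply Finset.sum_congr rfl
    intro x _
    by_cases hx : G.IsHalfEdge x
    · rw [if_pos hx, Finset.sum_eq_single (G.rv x)]
      · rw [if_pos ⟨hx, rfl⟩]
      · intro v _ hv
        rw [if_neg]
        rintro ⟨-, hr⟩
        exact hv (Subtype.ext hr.symm)
      · intro h; exact absurd (Finset.mem_univ _) h
    · rw [if_neg hx]
      exact Finset.sum_eq_zero fun v _ => if_neg (fun hc => hx hc.1)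
  rw [h1]
  apply Finset.sum_ninvolution G.i
  · intro x
    by_cases hx : G.IsHalfEdge x
    · rw [if_pos hx, if_pos (isHalfEdge_i hx), slope_i hs hg hx, add_neg_cancel]
    · have hix : ¬ G.IsHalfEdge (G.i x) := by
        intro h; exact h (by rw [not_not.mp (fun hc => hx hc)]; exact not_not.mp (fun hc => hx hc))
      rw [if_neg hx, if_neg hix, add_zero]
  · intro x h
    by_cases hx : G.IsHalfEdge x
    · exact hx
    · exact absurd (if_neg hx) h
  · intro x; exact Finset.mem_univ _
  · intro x; exact G.i_invol x

end Graph


section Tree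

variable {M : Type} [AddCancelCommMonoid M] {T : MGraph M}

/-- Adjacency avoiding the edge `{e', i e'}`. -/
def SideAdj (T : MGraph M) (e' : T.X) (u v : T.V) : Prop :=
  ∃ x, T.IsHalfEdge x ∧ x ≠ e' ∧ x ≠ T.i e' ∧ T.rv x = u ∧ T.rv (T.i x) = v

/-- The set of vertices on the `r (i e')` side of the edge `{e', i e'}`. -/
def Side (T : MGraph M) (e' : T.X) : Set T.V :=
  {u | Relation.ReflTransGen (SideAdj T e') (T.rv (T.i e')) u}

lemma sideAdj_symm {e' : T.X} {u v : T.V} (h : SideAdj T e' u v) : SideAdj T e' v u := by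
  obtain ⟨x, hx, h1, h2, h3, h4⟩ := h
  refine ⟨T.i x, isHalfEdge_i hx, ?_, ?_, h4, by rwa [T.i_invol]⟩
  · intro hc; apply h2; rw [← hc, T.i_invol]
  · intro hc; apply h1; have := congrArg T.i hc; rwa [T.i_invol, T.i_invol] at this

lemma side_step {e' : T.X} {u v : T.V} (h : SideAdj T e' u v) :
    u ∈ Side T e' ↔ v ∈ Side T e' :=
  ⟨fun hu => hu.tail h, fun hv => hv.tail (sideAdj_symm h)⟩

lemma rvi_mem_side (e' : T.X) : T.rv (T.i e') ∈ Side T e' := Relation.ReflTransGen.refl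

/-- Walks avoiding the edge `{e', i e'}`, recorded as lists of half-edges. -/
inductive AvWalk (T : MGraph M) (e' : T.X) : T.V → List T.X → T.V → Prop
  | nil (u) : AvWalk T e' u [] u
  | cons {x : T.X} {u w : T.V} {L : List T.X} : T.IsHalfEdge x → x ≠ e' → x ≠ T.i e' →
      T.rv x = u → AvWalk T e' (T.rv (T.i x)) L w → AvWalk T e' u (x :: L) w

lemma exists_walk {e' : T.X} {s t : T.V} (h : Relation.ReflTransGen (SideAdj T e') s t) :
    ∃ L, AvWalk T e' s L t := by
  induction h using Relation.ReflTransGen.head_induction_on with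
  | refl => exact ⟨[], AvWalk.nil _⟩
  | head hab _ ih =>
    obtain ⟨L, hL⟩ := ih
    obtain ⟨x, hx, h1, h2, h3, h4⟩ := hab
    exact ⟨x :: L, AvWalk.cons hx h1 h2 h3 (by rwa [h4])⟩

lemma walk_reduce {e' : T.X} : ∀ (L : List T.X) {u w : T.V}, AvWalk T e' u L w →
    ∃ P, AvWalk T e' u P w ∧ P.Chain' (fun a b => b ≠ T.i a) := by
  intro L
  induction L with
  | nil => intro u w h; exact ⟨[], h, List.isChain_nil⟩
  | cons x Q ih =>
    intro u w h
    cases h with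
    | cons hx h1 h2 h3 hsub =>
      obtain ⟨P, hP, hPc⟩ := ih hsub
      match P, hP, hPc with
      | [], hP, _ =>
        cases hP with
        | nil =>
          exact ⟨[x], AvWalk.cons hx h1 h2 h3 (AvWalk.nil _), List.isChain_singleton x⟩
      | z :: P', hP, hPc =>
        by_cases hz : z = T.i x
        · subst hz
          cases hP with
          | cons _ _ _ _ hsub' =>
            refine ⟨P', ?_, hPc.tail⟩
            rw [T.i_invol, h3] at hsub'
            exact hsub'
        · exact ⟨x :: z :: P', AvWalk.cons hx h1 h2 h3 hP,
            List.isChain_cons_cons.mpr ⟨hz, hPc⟩⟩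

lemma avWalk_mem {e' : T.X} {u w : T.V} {L : List T.X} (h : AvWalk T e' u L w) :
    ∀ x ∈ L, T.IsHalfEdge x ∧ x ≠ e' ∧ x ≠ T.i e' := by
  induction h with
  | nil => intro x hx; exact absurd hx List.not_mem_nil
  | cons hx h1 h2 h3 _ ih =>
    intro y hy
    rcases List.mem_cons.mp hy with rfl | hy
    · exact ⟨hx, h1, h2⟩
    · exact ih y hy

lemma avWalk_head {e' : T.X} {u w : T.V} {x : T.X} {L : List T.X}
    (h : AvWalk T e' u (x :: L) w) : T.rv x = u := by
  cases h with | cons _ _ _ h3 _ => exact h3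

lemma avWalk_chain {e' : T.X} {u w : T.V} {L : List T.X} (h : AvWalk T e' u L w) :
    ∀ (a : ℕ) (h1 : a < L.length) (h2 : a + 1 < L.length),
      T.rv (T.i (L.get ⟨a, h1⟩)) = T.rv (L.get ⟨a + 1, h2⟩) := by
  induction h with
  | nil => intro a h1 _; exact absurd h1 (by simp)
  | @cons x u' w' L' hx hne1 hne2 h3 hsub ih =>
    intro a h1 h2
    match a with
    | 0 =>
      have hlen : 0 < L'.length := by simp only [List.length_cons] at h2; omega
      obtain ⟨y, L'', rfl⟩ := List.exists_cons_of_ne_nil (List.ne_nil_of_length_pos hlen)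
      simpa using (avWalk_head hsub).symm
    | a' + 1 =>
      have g1 : a' < L'.length := by simp only [List.length_cons] at h1; omega
      have g2 : a' + 1 < L'.length := by simp only [List.length_cons] at h2; omega
      simpa using ih a' g1 g2

lemma avWalk_last {e' : T.X} {u w : T.V} {L : List T.X} (h : AvWalk T e' u L w)
    (hL : L ≠ []) : T.rv (T.i (L.getLast hL)) = w := by
  induction h with
  | nil => exact absurd rfl hL
  | @cons x u' w' L' hx h1 h2 h3 hsub ih =>
    match L', hsub with
    | [], hsub =>
      cases hsub with
      | nil => simp [List.getLast]
    | z :: L'', hsub =>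
      rw [List.getLast_cons (by simp)]
      exact ih (by simp)

lemma avWalk_nil_eq {e' : T.X} {u w : T.V} (h : AvWalk T e' u [] w) : u = w := by
  cases h with | nil => rfl

lemma root_not_mem_side (hT : ¬ T.HasCycle) {e' : T.X} (he' : T.IsHalfEdge e') :
    T.rv e' ∉ Side T e' := by
  intro hmem
  obtain ⟨L, hL⟩ := exists_walk hmem
  obtain ⟨P, hP, hPc⟩ := walk_reduce L hL
  apply hT
  set c : ZMod (P.length + 1) → T.X := fun j => (e' :: P).getD j.val e' with hc
  have hval : ∀ j : ZMod (P.length + 1), (j + 1).val = (j.val + 1) % (P.length + 1) := by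
    intro j
    rw [ZMod.val_add, ZMod.val_one_eq_one_mod]
    conv_rhs => rw [Nat.add_mod, Nat.mod_eq_of_lt (ZMod.val_lt j)]
  have hmemP : ∀ x ∈ P, T.IsHalfEdge x ∧ x ≠ e' ∧ x ≠ T.i e' := avWalk_mem hP
  have hgetP : ∀ (a : ℕ) (ha : a < P.length), P.getD a e' = P.get ⟨a, ha⟩ :=
    fun a ha => List.getD_eq_get (l := P) (d := e') ⟨a, ha⟩
  have hPmem : ∀ (a : ℕ) (ha : a < P.length), P.getD a e' ∈ P := by
    intro a ha; rw [hgetP a ha]; exact List.get_mem _ _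
  have hcj : ∀ (j : ZMod (P.length + 1)),
      c j = if j.val = 0 then e' else P.getD (j.val - 1) e' := by
    intro j
    show (e' :: P).getD j.val e' = _
    rcases Nat.eq_zero_or_pos j.val with h0 | h0
    · rw [h0, if_pos rfl]; exact List.getD_cons_zero
    · rw [if_neg (by omega)]
      obtain ⟨a, haa⟩ : ∃ a, j.val = a + 1 := ⟨j.val - 1, by omega⟩
      rw [haa]
      simp only [Nat.add_sub_cancel]
      exact List.getD_cons_succ
  refine ⟨P.length, c, ?_, ?_, ?_⟩
  · -- all half-edges
    intro j
    rw [hcj j]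
    split
    · exact he'
    · next h0 =>
      have hlt : j.val - 1 < P.length := by have := ZMod.val_lt j; omega
      exact (hmemP _ (hPmem _ hlt)).1
  · -- chain condition
    intro j
    have ha : j.val < P.length + 1 := ZMod.val_lt j
    rcases Nat.lt_or_ge j.val P.length with hak | hak
    · have hb : (j + 1).val = j.val + 1 := by
        rw [hval j, Nat.mod_eq_of_lt (by omega)]
      rw [hcj j, hcj (j + 1), hb,
        if_neg (show ¬ (j.val + 1 = 0) by omega)]
      simp only [Nat.add_sub_cancel]
      rcases Nat.eq_zero_or_pos j.val with h0 | h0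
      · rw [if_pos h0, h0]
        have hPne : P ≠ [] := List.ne_nil_of_length_pos (by omega)
        obtain ⟨y, P', hyP⟩ := List.exists_cons_of_ne_nil hPne
        have hhead := avWalk_head (hyP ▸ hP)
        rw [hyP]
        rw [show (y :: P').getD 0 e' = y from List.getD_cons_zero]
        exact (Subtype.ext_iff.mp hhead).symm
      · rw [if_neg (by omega)]
        obtain ⟨a, haa⟩ : ∃ a, j.val = a + 1 := ⟨j.val - 1, by omega⟩
        rw [haa]
        simp only [Nat.add_sub_cancel]
        rw [hgetP a (by omega), hgetP (a + 1) (by omega)]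
        exact Subtype.ext_iff.mp (avWalk_chain hP a (by omega) (by omega))
    · have hak' : j.val = P.length := by omega
      have hb : (j + 1).val = 0 := by rw [hval j, hak', Nat.mod_self]
      rw [hcj j, hcj (j + 1), hb, if_pos rfl]
      rcases Nat.eq_zero_or_pos P.length with hk0 | hk0
      · rw [if_pos (by omega)]
        have hPnil : P = [] := List.eq_nil_of_length_eq_zero hk0
        subst hPnil
        exact Subtype.ext_iff.mp (avWalk_nil_eq hP)
      · rw [if_neg (by omega), hak']
        have hPne : P ≠ [] := List.ne_nil_of_length_pos (by omega)
        rw [hgetP (P.length - 1) (by omega)]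
        rw [List.get_length_sub_one _]
        exact Subtype.ext_iff.mp (avWalk_last hP _)
  · -- no backtracking
    intro j
    have ha : j.val < P.length + 1 := ZMod.val_lt j
    rcases Nat.lt_or_ge j.val P.length with hak | hak
    · have hb : (j + 1).val = j.val + 1 := by
        rw [hval j, Nat.mod_eq_of_lt (by omega)]
      rw [hcj j, hcj (j + 1), hb,
        if_neg (show ¬ (j.val + 1 = 0) by omega)]
      simp only [Nat.add_sub_cancel]
      rcases Nat.eq_zero_or_pos j.val with h0 | h0
      · rw [if_pos h0, h0]
        exact (hmemP _ (hPmem 0 (by omega))).2.2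
      · rw [if_neg (by omega)]
        obtain ⟨a, haa⟩ : ∃ a, j.val = a + 1 := ⟨j.val - 1, by omega⟩
        rw [haa]
        simp only [Nat.add_sub_cancel]
        rw [hgetP a (by omega), hgetP (a + 1) (by omega)]
        exact List.isChain_iff_getElem.mp hPc a (by omega)
    · have hak' : j.val = P.length := by omega
      have hb : (j + 1).val = 0 := by rw [hval j, hak', Nat.mod_self]
      rw [hcj j, hcj (j + 1), hb, if_pos rfl]
      rcases Nat.eq_zero_or_pos P.length with hk0 | hk0
      · rw [if_pos (by omega)]
        intro hcontra
        exact he' hcontra.symm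
      · rw [if_neg (by omega), hak']
        intro hcontra
        have hcc : P.getD (P.length - 1) e' = T.i e' := by
          have h2 := congrArg T.i hcontra
          rw [T.i_invol] at h2
          exact h2.symm
        exact (hmemP _ (hPmem (P.length - 1) (by omega))).2.2 hcc

end Tree


section HomLemmas

variable {M : Type} [AddCancelCommMonoid M] {G T : MGraph M}

lemma isVertex_of_not_halfEdge {x : T.X} (h : ¬ T.IsHalfEdge x) : T.IsVertex x :=
  not_not.mp h

lemma mu_eq (hs : Sharp M) (φ : MGraph.Hom G T) {x : G.X}
    (hgx : G.IsHalfEdge x) (hx : T.IsHalfEdge (φ.f x)) {n : ℕ}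
    (h : T.l (φ.f x) = n • G.l x) : φ.mu x = n := by
  have hex : T.IsHalfEdge (φ.f x) ∧ ∃ m : ℕ, T.l (φ.f x) = m • G.l x := ⟨hx, n, h⟩
  rw [MGraph.Hom.mu, dif_pos hex]
  exact nsmul_cancel hs (l_ne_zero hgx) (hex.2.choose_spec.symm.trans h)

lemma multAt_eq_zero (φ : MGraph.Hom G T) (v : G.V) {e' : T.X}
    (he' : T.IsHalfEdge e') (h : φ.f v.val ≠ T.r e') : φ.multAt v e' = 0 := by
  rw [MGraph.Hom.multAt]
  apply Finset.sum_eq_zero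
  intro x _
  rw [if_neg]
  rintro ⟨hx, hr, hfx⟩
  apply h
  have h2 := (φ.edge x hx (hfx ▸ he')).1
  rw [← hr, h2, hfx]

lemma multAt_eq_mV {φ : MGraph.Hom G T} (hharm : φ.Harmonic) (v : G.V)
    {e' : T.X} (he' : T.IsHalfEdge e') (hr : T.r e' = φ.f v.val) :
    φ.multAt v e' = φ.mV v := by
  have hex : ∃ f', T.IsHalfEdge f' ∧ T.r f' = φ.f v.val := ⟨e', he', hr⟩
  rw [MGraph.Hom.mV, dif_pos hex]
  exact hharm v e' hex.choose he' hex.choose_spec.1 hr hex.choose_spec.2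

/-- The pullback of a vertex `s` of the target: `∑_{φ(v) = s} m_φ(v) · [v]`. -/
def Dv (φ : MGraph.Hom G T) (s : T.V) : G.V → ℤ :=
  fun v => if φ.vmap v = s then (φ.mV v : ℤ) else 0

lemma principal_Dv_step (hs : Sharp M) {φ : MGraph.Hom G T}
    (hharm : φ.Harmonic) (hT : ¬ T.HasCycle) {e' : T.X} (he' : T.IsHalfEdge e') :
    G.IsPrincipal (Dv φ (T.rv (T.i e')) - Dv φ (T.rv e')) := by
  have hie' : T.IsHalfEdge (T.i e') := isHalfEdge_i he'
  have htin : T.rv (T.i e') ∈ Side T e' := rvi_mem_side e'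
  have htout : T.rv e' ∉ Side T e' := root_not_mem_side hT he'
  have htne : T.rv (T.i e') ≠ T.rv e' := fun h => htout (h ▸ htin)
  have hrne : T.r (T.i e') ≠ T.r e' := fun h => htne (Subtype.ext h)
  set g : G.V → Gp M := fun v => if φ.vmap v ∈ Side T e' then Gp.of (T.l e') else 0 with hgdef
  have hgval : ∀ v : G.V, g v = if φ.vmap v ∈ Side T e' then Gp.of (T.l e') else 0 :=
    fun v => rfl
  have hslope : ∀ x : G.X, G.IsHalfEdge x → g (G.rv x) - g (G.rv (G.i x)) =
      ((if φ.f x = T.i e' then (φ.mu x : ℤ) else 0)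
        - (if φ.f x = e' then (φ.mu x : ℤ) else 0)) • Gp.of (G.l x) := by
    intro x hx
    by_cases hfx : T.IsHalfEdge (φ.f x)
    · obtain ⟨h1, h2, n, hn⟩ := φ.edge x hx hfx
      have hvx : φ.vmap (G.rv x) = T.rv (φ.f x) := Subtype.ext h1
      have hvix : φ.vmap (G.rv (G.i x)) = T.rv (T.i (φ.f x)) := Subtype.ext h2
      have hmu : φ.mu x = n := mu_eq hs φ hx hfx hn
      rw [hgval, hgval, hvx, hvix]
      by_cases hc1 : φ.f x = e'
      · have hc2 : φ.f x ≠ T.i e' := by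
          rw [hc1]; intro hcontra
          exact he' hcontra.symm
        rw [if_neg hc2, if_pos hc1, hc1]
        rw [if_neg htout, if_pos htin]
        have hl : T.l e' = n • G.l x := hc1 ▸ hn
        rw [hmu, hl, map_nsmul, zero_sub, zero_sub, neg_zsmul, natCast_zsmul]
      · by_cases hc2 : φ.f x = T.i e'
        · rw [if_pos hc2, if_neg hc1, hc2, T.i_invol]
          rw [if_pos htin, if_neg htout]
          have hl : T.l e' = n • G.l x := by
            rw [← T.l_i e', ← hc2]; exact hn
          rw [hmu, hl, map_nsmul, sub_zero, sub_zero, natCast_zsmul]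
        · rw [if_neg hc1, if_neg hc2, sub_self, zero_zsmul]
          have hadj : SideAdj T e' (T.rv (φ.f x)) (T.rv (T.i (φ.f x))) :=
            ⟨φ.f x, hfx, hc1, hc2, rfl, rfl⟩
          by_cases hmem2 : T.rv (φ.f x) ∈ Side T e'
          · rw [if_pos hmem2, if_pos ((side_step hadj).mp hmem2), sub_self]
          · rw [if_neg hmem2, if_neg (fun hh => hmem2 ((side_step hadj).mpr hh)), sub_self]
    · have hcv := φ.contr x hx (isVertex_of_not_halfEdge hfx)
      have hveq : φ.vmap (G.rv x) = φ.vmap (G.rv (G.i x)) :=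
        Subtype.ext (hcv.1.trans hcv.2.symm)
      rw [hgval, hgval, hveq, sub_self]
      rw [if_neg (fun hh : φ.f x = T.i e' => hfx (hh ▸ hie')),
        if_neg (fun hh : φ.f x = e' => hfx (hh ▸ he')), sub_self, zero_zsmul]
  have hPL : G.IsPL g := fun x hx => ⟨_, hslope x hx⟩
  refine ⟨g, hPL, ?_⟩
  funext v
  rw [MGraph.lap]
  have hterm : ∀ x : G.X, (if G.IsHalfEdge x ∧ G.r x = v.val then G.slope g x else 0)
      = (if G.IsHalfEdge x ∧ G.r x = v.val ∧ φ.f x = T.i e' then (φ.mu x : ℤ) else 0)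
        - (if G.IsHalfEdge x ∧ G.r x = v.val ∧ φ.f x = e' then (φ.mu x : ℤ) else 0) := by
    intro x
    by_cases hc : G.IsHalfEdge x ∧ G.r x = v.val
    · rw [if_pos hc, slope_eq hs g hc.1 (hslope x hc.1)]
      by_cases hc1 : φ.f x = T.i e'
      · have hx1 : G.IsHalfEdge x ∧ G.r x = v.val ∧ φ.f x = T.i e' := ⟨hc.1, hc.2, hc1⟩
        have hne2 : φ.f x ≠ e' := fun hh => hrne (by rw [← hc1, hh])
        have hnx2 : ¬(G.IsHalfEdge x ∧ G.r x = v.val ∧ φ.f x = e') := fun hh => hne2 hh.2.2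
        rw [if_pos hc1, if_pos hx1, if_neg hne2, if_neg hnx2]
      · have hnx1 : ¬(G.IsHalfEdge x ∧ G.r x = v.val ∧ φ.f x = T.i e') := fun hh => hc1 hh.2.2
        rw [if_neg hc1, if_neg hnx1]
        by_cases hc2 : φ.f x = e'
        · have hx2 : G.IsHalfEdge x ∧ G.r x = v.val ∧ φ.f x = e' := ⟨hc.1, hc.2, hc2⟩
          rw [if_pos hc2, if_pos hx2]
        · have hnx2 : ¬(G.IsHalfEdge x ∧ G.r x = v.val ∧ φ.f x = e') := fun hh => hc2 hh.2.2
          rw [if_neg hc2, if_neg hnx2]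
    · have hn1 : ¬(G.IsHalfEdge x ∧ G.r x = v.val ∧ φ.f x = T.i e') := fun hh => hc ⟨hh.1, hh.2.1⟩
      have hn2 : ¬(G.IsHalfEdge x ∧ G.r x = v.val ∧ φ.f x = e') := fun hh => hc ⟨hh.1, hh.2.1⟩
      rw [if_neg hc, if_neg hn1, if_neg hn2, sub_self]
  rw [Finset.sum_congr rfl (fun x _ => hterm x), Finset.sum_sub_distrib]
  have hcast : ∀ e'' : T.X, ((φ.multAt v e'' : ℤ))
      = ∑ x : G.X, if G.IsHalfEdge x ∧ G.r x = v.val ∧ φ.f x = e'' then (φ.mu x : ℤ) else 0 := by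
    intro e''
    rw [MGraph.Hom.multAt]
    push_cast
    rfl
  rw [← hcast, ← hcast]
  show (φ.multAt v (T.i e') : ℤ) - (φ.multAt v e' : ℤ)
      = Dv φ (T.rv (T.i e')) v - Dv φ (T.rv e') v
  rw [Dv, Dv]
  have hvmap : ∀ y : T.X, (φ.vmap v = T.rv y) ↔ (φ.f v.val = T.r y) :=
    fun y => Subtype.ext_iff
  by_cases hv1 : φ.f v.val = T.r (T.i e')
  · rw [multAt_eq_mV hharm v hie' hv1.symm,
      multAt_eq_zero φ v he' (fun hh => hrne (hv1 ▸ hh)),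
      if_pos ((hvmap (T.i e')).mpr hv1),
      if_neg (fun hh => hrne (hv1 ▸ (hvmap e').mp hh))]
    simp
  · rw [multAt_eq_zero φ v hie' hv1, if_neg (fun hh => hv1 ((hvmap (T.i e')).mp hh))]
    by_cases hv2 : φ.f v.val = T.r e'
    · rw [multAt_eq_mV hharm v he' hv2.symm, if_pos ((hvmap e').mpr hv2)]
      simp
    · rw [multAt_eq_zero φ v he' hv2, if_neg (fun hh => hv2 ((hvmap e').mp hh))]
      simp

end HomLemmas


section PathInduction

variable {M : Type} [AddCancelCommMonoid M] {G T : MGraph M}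

lemma principal_Dv (hs : Sharp M) {φ : MGraph.Hom G T} (hharm : φ.Harmonic)
    (hTt : T.IsTree) (s s' : T.V) : G.IsPrincipal (Dv φ s - Dv φ s') := by
  have hconn : Relation.ReflTransGen T.Adj s' s := hTt.1.2 s' s
  induction hconn with
  | refl =>
    rw [sub_self]
    exact isPrincipal_zero hs
  | tail hab hbc ih =>
    obtain ⟨x, hx, hrx, hrix⟩ := hbc
    have step := principal_Dv_step hs hharm hTt.2 hx
    rw [hrix, hrx] at step
    next b c =>
      have heq : Dv φ c - Dv φ s' = (Dv φ c - Dv φ b) + (Dv φ b - Dv φ s') := by abel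
      rw [heq]
      exact isPrincipal_add hs step ih

end PathInduction

end GonAux

/-- **Theorem 3.2** (`dgon(Γ) ≤ ggon(Γ)`), in its equivalent pointwise form: for every
harmonic, non-degenerate morphism `φ : Γ → T` onto an `M`-metrised tree `T`, there is a
divisor `D` on `Γ` of rank at least `1` with `deg(D) = deg(φ)`; in particular
`dgon(Γ) ≤ deg(φ)`. -/
theorem MGraph.dgon_le_ggon (M : Type) [AddCancelCommMonoid M] (hsharp : Sharp M)
    (G : MGraph M) (hconn : G.IsConnected) :
    ∀ (T : MGraph M) (φ : MGraph.Hom G T), T.IsTree → φ.Harmonic → φ.Nondeg →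
      (∃ D : G.V → ℤ, 1 ≤ G.rank D ∧ G.degD D = (φ.deg : ℤ)) ∧ G.dgon ≤ (φ.deg : ℤ) := by
  intro T φ hTree hharm hnd
  classical
  -- `G` has a vertex
  obtain ⟨x0⟩ := hconn.1
  set v0 : G.V := G.rv x0 with hv0
  -- `T` has a half-edge
  have hmv0 : 0 < φ.mV v0 := hnd v0
  have hex : ∃ e', T.IsHalfEdge e' := by
    by_contra hne
    push_neg at hne
    rw [MGraph.Hom.mV, dif_neg] at hmv0
    · exact lt_irrefl 0 hmv0
    · rintro ⟨e', he', -⟩; exact hne e' he'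
  set e0 : T.X := hex.choose with he0def
  have he0 : T.IsHalfEdge e0 := hex.choose_spec
  have hdeg : φ.deg = φ.mE e0 := by rw [MGraph.Hom.deg, dif_pos hex]
  set t0 : T.V := T.rv e0 with ht0
  set D : G.V → ℤ := GonAux.Dv φ t0 with hD
  -- the degree of `D` is the degree of `φ`
  have hdegD : G.degD D = (φ.deg : ℤ) := by
    rw [hdeg, MGraph.degD, MGraph.Hom.mE]
    push_cast
    apply Finset.sum_congr rfl
    intro v _
    rw [hD, GonAux.Dv]
    by_cases hv : φ.f v.val = T.r e0
    · rw [if_pos (show φ.vmap v = t0 from Subtype.ext hv), if_pos hv,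
        GonAux.multAt_eq_mV hharm v he0 hv.symm]
    · rw [if_neg (fun hh : φ.vmap v = t0 => hv (Subtype.ext_iff.mp hh)), if_neg hv]
  -- key degree bound
  have key : ∀ (D' : G.V → ℤ) (k : ℤ), 0 ≤ k →
      (∀ F : G.V → ℤ, G.Effective F → G.degD F = k →
        ∃ E : G.V → ℤ, G.Effective E ∧ G.IsPrincipal (D' - F - E)) → k ≤ G.degD D' := by
    intro D' k hk hmem
    have hFeff : G.Effective (fun v => if v = v0 then k else 0) := by
      intro v; dsimp only; split
      · exact hk
      · exact le_refl 0
    have hFdeg : G.degD (fun v => if v = v0 then k else 0) = k := by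
      rw [MGraph.degD]
      simp [Finset.sum_ite_eq']
    obtain ⟨E, hEeff, hEpr⟩ := hmem _ hFeff hFdeg
    obtain ⟨g, hg, hlap⟩ := hEpr
    have h0 : G.degD (D' - (fun v => if v = v0 then k else 0) - E) = 0 := by
      rw [← hlap]; exact GonAux.degD_lap hsharp hg
    have hsplit : G.degD (D' - (fun v => if v = v0 then k else 0) - E)
        = G.degD D' - G.degD (fun v => if v = v0 then k else 0) - G.degD E := by
      simp [MGraph.degD, Finset.sum_sub_distrib]
    have hE0 : (0:ℤ) ≤ G.degD E := Finset.sum_nonneg (fun v _ => hEeff v)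
    rw [hsplit, hFdeg] at h0
    omega
  -- `1` belongs to the rank set of `D`
  have h1mem : ∀ F : G.V → ℤ, G.Effective F → G.degD F = 1 →
      ∃ E : G.V → ℤ, G.Effective E ∧ G.IsPrincipal (D - F - E) := by
    intro F hFeff hFdeg
    have hex_w : ∃ w : G.V, 1 ≤ F w := by
      by_contra hno
      push_neg at hno
      have hle : G.degD F ≤ 0 :=
        Finset.sum_nonpos (fun v _ => by have h1 := hno v; omega)
      omega
    obtain ⟨w, hw⟩ := hex_w
    have htot := Finset.add_sum_erase Finset.univ F (Finset.mem_univ w)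
    have hub : (0:ℤ) ≤ ∑ v ∈ Finset.univ.erase w, F v :=
      Finset.sum_nonneg (fun v _ => hFeff v)
    rw [MGraph.degD] at hFdeg
    have hFw : F w = 1 := by omega
    have hrest0 : ∑ v ∈ Finset.univ.erase w, F v = 0 := by omega
    have hw0 : ∀ v, v ≠ w → F v = 0 := by
      intro v hv
      exact (Finset.sum_eq_zero_iff_of_nonneg (fun u _ => hFeff u)).mp hrest0 v
        (Finset.mem_erase.mpr ⟨hv, Finset.mem_univ v⟩)
    refine ⟨GonAux.Dv φ (φ.vmap w) - F, ?_, ?_⟩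
    · intro v
      rw [Pi.sub_apply, GonAux.Dv]
      by_cases hv : v = w
      · subst hv
        rw [if_pos rfl, hFw]
        have hpos := hnd v
        omega
      · rw [hw0 v hv]
        split
        · have : (0:ℤ) ≤ (φ.mV v : ℤ) := Int.natCast_nonneg _
          omega
        · omega
    · have hrw : D - F - (GonAux.Dv φ (φ.vmap w) - F)
          = GonAux.Dv φ t0 - GonAux.Dv φ (φ.vmap w) := by
        rw [hD]; abel
      rw [hrw]
      exact GonAux.principal_Dv hsharp hharm hTree t0 (φ.vmap w)
  have hbdd : BddAbove {k : ℤ | ∀ F : G.V → ℤ, G.Effective F → G.degD F = k →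
      ∃ E : G.V → ℤ, G.Effective E ∧ G.IsPrincipal (D - F - E)} := by
    refine ⟨G.degD D, ?_⟩
    intro k hk
    rcases le_or_gt k 0 with hk0 | hk0
    · have : (0:ℤ) ≤ G.degD D := by rw [hdegD]; exact Int.natCast_nonneg _
      omega
    · exact key D k (by omega) hk
  have hrank : 1 ≤ G.rank D := by
    rw [MGraph.rank]
    exact le_csSup hbdd h1mem
  refine ⟨⟨D, hrank, hdegD⟩, ?_⟩
  -- the gonality bound
  have hmemA : (φ.deg : ℤ) ∈ {d : ℤ | ∃ D' : G.V → ℤ, 1 ≤ G.rank D' ∧ G.degD D' = d} :=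
    ⟨D, hrank, hdegD⟩
  have hlb : ∀ d ∈ {d : ℤ | ∃ D' : G.V → ℤ, 1 ≤ G.rank D' ∧ G.degD D' = d}, (1:ℤ) ≤ d := by
    rintro d ⟨D', hr, rfl⟩
    rw [MGraph.rank] at hr
    set S' := {k : ℤ | ∀ F : G.V → ℤ, G.Effective F → G.degD F = k →
      ∃ E : G.V → ℤ, G.Effective E ∧ G.IsPrincipal (D' - F - E)} with hS'
    have hne : S'.Nonempty ∧ BddAbove S' := by
      by_contra hcon
      have hzero : sSup S' = 0 := by
        rcases not_and_or.mp hcon with h | h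
        · rw [Set.not_nonempty_iff_eq_empty.mp h, Int.csSup_empty]
        · exact Int.csSup_of_not_bddAbove h
      omega
    have hmem' := Int.csSup_mem hne.1 hne.2
    have hle := key D' (sSup S') (by omega) hmem'
    omega
  rw [MGraph.dgon]
  exact csInf_le ⟨1, hlb⟩ hmemA

end
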